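/- Let Γ be a group, n ≥ 2, and let f : Γ → Sym(n) be a group homomorphism that defines a transitive action of Γ on [n]. Define Ψ_n : Sym(n) → Sym(n−1) by Ψ_n(σ)(x) = σ(x) if σ(x) ≠ n and Ψ_n(σ)(x) = σ(σ(x)) if σ(x) = n, for x ∈ [n−1], and set f̂ = Ψ_n ∘ f : Γ → Sym(n−1). Then defect_∞(f̂) ≤ 2/(n−1), and for every group homomorphism h : Γ → Sym(n−1), d_∞(h, f̂) ≥ 1/2 − 1/(n−1). -/

import Mathlib

open Finset

/-- Extend a permutation of `Fin n` to a partial function `ℕ → Option ℕ`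
(`none` playing the role of the dummy symbol `⋆`). -/
def permExt {n : ℕ} (σ : Equiv.Perm (Fin n)) : ℕ → Option ℕ :=
  fun x => if h : x < n then some ((σ ⟨x, h⟩ : Fin n) : ℕ) else none

/-- The (extended) normalized Hamming distance between permutations of possibly
different sizes.  For `n = N` it is `|{x : σ x ≠ τ x}| / n`; for `n ≤ N` it is
`(|{x ∈ [n] : σ x ≠ τ x}| + (N - n)) / N`. -/
noncomputable def dH {n N : ℕ} (σ : Equiv.Perm (Fin n)) (τ : Equiv.Perm (Fin N)) : ℝ :=
  (((Finset.range (max n N)).filter fun x => permExt σ x ≠ permExt τ x).card : ℝ)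
    / ((max n N : ℕ) : ℝ)

/-- The uniform local defect of a map into a symmetric group. -/
noncomputable def defectInfty {Γ : Type*} [Group Γ] {n : ℕ}
    (f : Γ → Equiv.Perm (Fin n)) : ℝ :=
  ⨆ p : Γ × Γ, dH (f (p.1 * p.2)) (f p.1 * f p.2)

/-- The uniform distance between two maps into (possibly different) symmetric groups. -/
noncomputable def dInfty {Γ : Type*} {n N : ℕ}
    (f : Γ → Equiv.Perm (Fin n)) (h : Γ → Equiv.Perm (Fin N)) : ℝ :=
  ⨆ γ : Γ, dH (f γ) (h γ)

/-- A finitely-additive probability measure on (the power set of) `Γ`. -/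
def IsFinAddProb {Γ : Type*} (m : Set Γ → ℝ) : Prop :=
  (∀ A : Set Γ, 0 ≤ m A ∧ m A ≤ 1) ∧ m Set.univ = 1 ∧
    ∀ A B : Set Γ, Disjoint A B → m (A ∪ B) = m A + m B

/-- Left invariance of a finitely-additive measure. -/
def LeftInvariant {Γ : Type*} [Group Γ] (m : Set Γ → ℝ) : Prop :=
  ∀ (γ : Γ) (A : Set Γ), m ((fun a => γ * a) '' A) = m A

/-- Right invariance of a finitely-additive measure. -/
def RightInvariant {Γ : Type*} [Group Γ] (m : Set Γ → ℝ) : Prop :=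
  ∀ (γ : Γ) (A : Set Γ), m ((fun a => a * γ) '' A) = m A

/-- Inverse invariance of a finitely-additive measure. -/
def InvInvariant {Γ : Type*} [Group Γ] (m : Set Γ → ℝ) : Prop :=
  ∀ A : Set Γ, m A⁻¹ = m A

/-- A discrete group is amenable if it admits a left-invariant finitely-additive
probability measure. -/
def IsAmenable (Γ : Type*) [Group Γ] : Prop :=
  ∃ m : Set Γ → ℝ, IsFinAddProb m ∧ LeftInvariant m

/-- A function between groups is symmetric if it sends `1 ↦ 1` and respects inverses. -/
def IsSymmetricMap {Γ G : Type*} [Group Γ] [Group G] (f : Γ → G) : Prop :=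
  f 1 = 1 ∧ ∀ γ : Γ, f γ⁻¹ = (f γ)⁻¹

/-- The weight `w(x →γ→ y)` : the measure of the set of supporters
`T(x →γ→ y) = { t : f(t)(f(t⁻¹γ)(x)) = y }`. -/
def weight {Γ : Type*} [Group Γ] {n : ℕ} (m : Set Γ → ℝ)
    (f : Γ → Equiv.Perm (Fin n)) (x : Fin n) (γ : Γ) (y : Fin n) : ℝ :=
  m { t : Γ | f t (f (t⁻¹ * γ) x) = y }

lemma dH_nonneg {n N : ℕ} (σ : Equiv.Perm (Fin n)) (τ : Equiv.Perm (Fin N)) : 0 ≤ dH σ τ := by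
  unfold dH; positivity

lemma dH_le_one {n N : ℕ} (σ : Equiv.Perm (Fin n)) (τ : Equiv.Perm (Fin N)) : dH σ τ ≤ 1 := by
  unfold dH
  rcases Nat.eq_zero_or_pos (max n N) with h | h
  · simp [h]
  · rw [div_le_one (by exact_mod_cast h)]
    exact_mod_cast (Finset.card_filter_le _ _).trans (by simp)

lemma dH_eq_card {M : ℕ} (σ τ : Equiv.Perm (Fin M)) :
    dH σ τ = ((Finset.univ.filter fun z : Fin M => σ z ≠ τ z).card : ℝ) / M := by
  unfold dH
  rw [Nat.max_self]
  congr 2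
  apply Finset.card_bij (fun x hx => (⟨x, Finset.mem_range.mp (Finset.mem_filter.mp hx).1⟩ : Fin M))
  · intro a ha
    have h1 := (Finset.mem_filter.mp ha).1
    have h2 := (Finset.mem_filter.mp ha).2
    have hlt := Finset.mem_range.mp h1
    simp only [Finset.mem_filter, Finset.mem_univ, true_and]
    intro heq
    apply h2
    simp [permExt, hlt, heq]
  · intro a ha b hb hab
    simpa [Fin.ext_iff] using congrArg Fin.val hab
  · intro z hz
    have h2 := (Finset.mem_filter.mp hz).2
    refine ⟨(z : ℕ), Finset.mem_filter.mpr ⟨Finset.mem_range.mpr z.isLt, ?_⟩, by simp⟩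
    simp only [permExt, z.isLt, dif_pos, ne_eq, Option.some_inj]
    simp only [Fin.eta]
    exact fun hc => h2 (Fin.val_injective hc)

def extEquiv (n : ℕ) : Fin (n-1) ≃ {z : Fin n // (z : ℕ) < n - 1} where
  toFun z := ⟨Fin.castLE (Nat.sub_le n 1) z, z.isLt⟩
  invFun z := ⟨(z.1 : ℕ), z.2⟩
  left_inv _ := rfl
  right_inv _ := rfl

section
variable {Γ : Type*} [Group Γ] {n : ℕ}
variable {Γ : Type*} [Group Γ] {n : ℕ}

-- pointwise multiplicativity of fhat away from two bad points
lemma fhat_mul_apply (hn : 2 ≤ n)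
    (f : Γ →* Equiv.Perm (Fin n))
    (fhat : Γ → Equiv.Perm (Fin (n - 1)))
    (hfhat : ∀ (γ : Γ) (x : Fin (n - 1)),
      (fhat γ x : ℕ) =
        if (f γ (Fin.castLE (Nat.sub_le n 1) x) : ℕ) = n - 1
        then (f γ (f γ (Fin.castLE (Nat.sub_le n 1) x)) : ℕ)
        else (f γ (Fin.castLE (Nat.sub_le n 1) x) : ℕ))
    (γ₁ γ₂ : Γ) (x : Fin (n - 1))
    (h2 : ((f γ₂ (Fin.castLE (Nat.sub_le n 1) x) : Fin n) : ℕ) ≠ n - 1)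
    (h12 : ((f (γ₁ * γ₂) (Fin.castLE (Nat.sub_le n 1) x) : Fin n) : ℕ) ≠ n - 1) :
    fhat (γ₁ * γ₂) x = (fhat γ₁ * fhat γ₂) x := by
  set xc := Fin.castLE (Nat.sub_le n 1) x with hxc
  have hv2 : (fhat γ₂ x : ℕ) = ((f γ₂ xc : Fin n) : ℕ) := by
    rw [hfhat, if_neg h2]
  have hcast : Fin.castLE (Nat.sub_le n 1) (fhat γ₂ x) = f γ₂ xc := by
    apply Fin.ext; simpa using hv2
  have hmul : f (γ₁ * γ₂) xc = f γ₁ (f γ₂ xc) := by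
    rw [map_mul]; rfl
  apply Fin.ext
  rw [Equiv.Perm.mul_apply]
  rw [hfhat γ₁ (fhat γ₂ x), hcast, hfhat (γ₁ * γ₂) x, if_neg h12]
  rw [if_neg (by rw [← hmul]; exact h12), hmul]

end


lemma key_lemma {Γ : Type*} [Group Γ] {n : ℕ} (hn : 3 ≤ n)
    (f q : Γ →* Equiv.Perm (Fin n)) (htrans : ∀ x y : Fin n, ∃ γ : Γ, f γ x = y)
    (star : Fin n) (hstar : ∀ γ : Γ, q γ star = star)
    (hD : ∀ γ : Γ, n ≤ 2 * (Finset.univ.filter fun x : Fin n => f γ x = q γ x).card) :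
    False := by
  classical
  set O : Finset (Equiv.Perm (Fin n)) :=
    (Set.toFinite (Set.range fun γ : Γ => q γ * (f γ)⁻¹)).toFinset with hO
  have hmem : ∀ {g : Equiv.Perm (Fin n)}, g ∈ O ↔ ∃ γ : Γ, q γ * (f γ)⁻¹ = g := by
    intro g; rw [hO, Set.Finite.mem_toFinset, Set.mem_range]
  set N := O.card with hNdef
  have hO1 : (1 : Equiv.Perm (Fin n)) ∈ O := hmem.mpr ⟨1, by simp⟩
  have hN1 : 1 ≤ N := Finset.card_pos.mpr ⟨1, hO1⟩
  set c : Fin n → Fin n → ℕ := fun x y => (O.filter fun g => g x = y).card with hc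
  -- row sums
  have hrow : ∀ x : Fin n, ∑ y, c x y = N :=
    fun x => (Finset.card_eq_sum_card_fiberwise (fun g _ => Finset.mem_univ (g x))).symm
  -- column sums
  have hcol : ∀ y : Fin n, ∑ x, c x y = N := by
    intro y
    have : ∀ x, c x y = (O.filter fun g => g⁻¹ y = x).card := by
      intro x
      show (O.filter fun g => g x = y).card = _
      congr 1
      apply Finset.filter_congr
      intro g _
      constructor
      · intro h; rw [← h]; simp
      · intro h; rw [← h]; simp
    simp_rw [this]
    exact (Finset.card_eq_sum_card_fiberwise (fun g _ => Finset.mem_univ (g⁻¹ y))).symm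
  -- invariance
  have hinv : ∀ (γ : Γ) (x y : Fin n), c (f γ x) (q γ y) = c x y := by
    intro γ x y
    rw [hc]
    apply Finset.card_bij' (fun g _ => (q γ)⁻¹ * g * f γ) (fun g _ => q γ * g * (f γ)⁻¹)
    · intro g hg
      have hg1 := (Finset.mem_filter.mp hg).1
      have hg2 := (Finset.mem_filter.mp hg).2
      obtain ⟨α, hα⟩ := hmem.mp hg1
      refine Finset.mem_filter.mpr ⟨hmem.mpr ⟨γ⁻¹ * α, ?_⟩, ?_⟩
      · rw [map_mul, map_mul, ← hα]
        simp [mul_assoc, map_inv]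
      · simp only [Equiv.Perm.mul_apply]
        rw [hg2]
        simp
    · intro g hg
      have hg1 := (Finset.mem_filter.mp hg).1
      have hg2 := (Finset.mem_filter.mp hg).2
      obtain ⟨α, hα⟩ := hmem.mp hg1
      refine Finset.mem_filter.mpr ⟨hmem.mpr ⟨γ * α, ?_⟩, ?_⟩
      · rw [map_mul, map_mul, ← hα]
        simp [mul_assoc, map_inv]
      · simp only [Equiv.Perm.mul_apply]
        rw [(show ∀ (σ : Equiv.Perm (Fin n)) (z : Fin n), σ⁻¹ (σ z) = z from fun σ z => σ.symm_apply_apply z), hg2]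
    · intro g _; group
    · intro g _; group
  -- overlap bound
  have hov : ∀ g ∈ O, ∀ g' ∈ O,
      n ≤ 2 * (Finset.univ.filter fun x : Fin n => g x = g' x).card := by
    intro g hg g' hg'
    obtain ⟨α, hα⟩ := hmem.mp hg
    obtain ⟨β, hβ⟩ := hmem.mp hg'
    refine le_trans (hD (β⁻¹ * α)) (Nat.mul_le_mul_left 2 (le_of_eq ?_))
    apply Finset.card_bij (fun u _ => f α u)
    · intro u hu
      have hu2 := (Finset.mem_filter.mp hu).2
      refine Finset.mem_filter.mpr ⟨Finset.mem_univ _, ?_⟩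
      rw [← hα, ← hβ]
      simp only [Equiv.Perm.mul_apply, (show ∀ (σ : Equiv.Perm (Fin n)) (z : Fin n), σ⁻¹ (σ z) = z from fun σ z => σ.symm_apply_apply z)]
      have h1 : (f β)⁻¹ ((f α) u) = f (β⁻¹ * α) u := by
        rw [map_mul, map_inv]; rfl
      rw [h1, hu2]
      have h2 : q α u = q β (q (β⁻¹ * α) u) := by
        rw [map_mul, map_inv]; simp
      exact h2
    · intro a _ b _ hab
      exact (f α).injective hab
    · intro x hx
      have hx2 := (Finset.mem_filter.mp hx).2
      refine ⟨(f α)⁻¹ x, Finset.mem_filter.mpr ⟨Finset.mem_univ _, ?_⟩, by simp⟩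
      rw [← hα, ← hβ] at hx2
      simp only [Equiv.Perm.mul_apply] at hx2
      have h1 : (f β)⁻¹ x = f (β⁻¹ * α) ((f α)⁻¹ x) := by
        simp [map_mul, map_inv, Equiv.Perm.mul_apply]
      have h2 : q (β⁻¹ * α) ((f α)⁻¹ x) = (q β)⁻¹ (q α ((f α)⁻¹ x)) := by
        rw [map_mul, map_inv]; rfl
      rw [← h1, h2, hx2]
      simp
  -- second moment identity per row
  have hsq : ∀ x : Fin n, ∑ y, c x y * c x y =
      ∑ g ∈ O, ∑ g' ∈ O, if g x = g' x then 1 else 0 := by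
    intro x
    have hcf : ∀ y, c x y = ∑ g ∈ O, if g x = y then 1 else 0 := by
      intro y; exact Finset.card_filter _ _
    calc ∑ y, c x y * c x y
        = ∑ y, (∑ g ∈ O, if g x = y then 1 else 0) * (∑ g' ∈ O, if g' x = y then 1 else 0) := by
          simp_rw [← hcf]
      _ = ∑ y, ∑ g ∈ O, ∑ g' ∈ O, (if g x = y then 1 else 0) * (if g' x = y then 1 else 0) := by
          simp_rw [Finset.sum_mul_sum]
      _ = ∑ g ∈ O, ∑ g' ∈ O, ∑ y, (if g x = y then 1 else 0) * (if g' x = y then 1 else 0) := by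
          rw [Finset.sum_comm]
          apply Finset.sum_congr rfl
          intro g _
          rw [Finset.sum_comm]
      _ = ∑ g ∈ O, ∑ g' ∈ O, if g x = g' x then 1 else 0 := by
          apply Finset.sum_congr rfl; intro g _
          apply Finset.sum_congr rfl; intro g' _
          have hite : ∀ y, (if g x = y then (1:ℕ) else 0) * (if g' x = y then 1 else 0)
              = if g x = y then (if g' x = y then 1 else 0) else 0 := by
            intro y; by_cases h : g x = y <;> simp [h]
          simp_rw [hite]
          rw [Finset.sum_ite_eq]
          simp [eq_comm]
  -- lower bound for the second moment
  have hTov : ∑ x : Fin n, ∑ y, c x y * c x y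
      = ∑ g ∈ O, ∑ g' ∈ O, (Finset.univ.filter fun x : Fin n => g x = g' x).card := by
    simp_rw [hsq]
    rw [Finset.sum_comm]
    apply Finset.sum_congr rfl
    intro g _
    rw [Finset.sum_comm]
    apply Finset.sum_congr rfl
    intro g' _
    exact (Finset.card_filter _ _).symm
  have hlow : N * N * n ≤ 2 * ∑ x : Fin n, ∑ y, c x y * c x y := by
    rw [hTov, Finset.mul_sum]
    calc N * N * n = ∑ _g ∈ O, ∑ _g' ∈ O, n := by
          rw [Finset.sum_const, Finset.sum_const, smul_eq_mul, smul_eq_mul, ← hNdef]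
          ring
      _ ≤ ∑ g ∈ O, ∑ g' ∈ O, 2 * (Finset.univ.filter fun x : Fin n => g x = g' x).card :=
          Finset.sum_le_sum fun g hg => Finset.sum_le_sum fun g' hg' => hov g hg g' hg'
      _ = _ := by
          apply Finset.sum_congr rfl
          intro g _
          rw [Finset.mul_sum]
  -- the star column is constant
  set k := c star star with hkdef
  have hkconst : ∀ x : Fin n, c x star = k := by
    intro x
    obtain ⟨γ, hγ⟩ := htrans star x
    have := hinv γ star star
    rw [hγ, hstar] at this
    exact this
  have hNk : N = n * k := by
    rw [← hcol star]
    simp_rw [hkconst]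
    simp [Finset.sum_const, Finset.card_univ, mul_comm]
  have hk1 : 1 ≤ k := by
    rcases Nat.eq_zero_or_pos k with h | h
    · rw [h, mul_zero] at hNk; omega
    · exact h
  by_cases hY : ∀ x y : Fin n, 2 * c x y ≤ N
  · -- no majority anywhere: contradiction by counting
    have hup : ∀ y : Fin n, 2 * ∑ x, c x y * c x y ≤ N * N := by
      intro y
      calc 2 * ∑ x, c x y * c x y = ∑ x, 2 * c x y * c x y := by
            rw [Finset.mul_sum]; apply Finset.sum_congr rfl; intros; ring
        _ ≤ ∑ x, N * c x y := Finset.sum_le_sum fun x _ => Nat.mul_le_mul_right _ (hY x y)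
        _ = N * ∑ x, c x y := (Finset.mul_sum _ _ _).symm
        _ = N * N := by rw [hcol]
    have hstarcol : ∑ x : Fin n, c x star * c x star = n * (k * k) := by
      simp_rw [hkconst]
      simp [Finset.sum_const, Finset.card_univ, mul_comm]
    have hupper : 2 * ∑ x : Fin n, ∑ y, c x y * c x y ≤ 2 * (n * (k * k)) + (n - 1) * (N * N) := by
      rw [Finset.sum_comm, Finset.mul_sum]
      rw [← Finset.sum_erase_add _ _ (Finset.mem_univ star)]
      have h1 : ∑ y ∈ Finset.univ.erase star, 2 * ∑ x, c x y * c x y ≤ (n - 1) * (N * N) := by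
        calc ∑ y ∈ Finset.univ.erase star, 2 * ∑ x, c x y * c x y
            ≤ ∑ _y ∈ Finset.univ.erase star, N * N := Finset.sum_le_sum fun y _ => hup y
          _ = (n - 1) * (N * N) := by
              rw [Finset.sum_const, Finset.card_erase_of_mem (Finset.mem_univ star)]
              simp [Finset.card_univ]
      have h2 : 2 * ∑ x, c x star * c x star = 2 * (n * (k * k)) := by rw [hstarcol]
      omega
    have hcontra : N * N * n ≤ 2 * (n * (k * k)) + (n - 1) * (N * N) := le_trans hlow hupper
    set X := N * N with hXdef
    have h4 : n * X = (n - 1) * X + X := by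
      conv_lhs => rw [← Nat.succ_pred_eq_of_pos (show 0 < n by omega)]
      rw [Nat.succ_mul]; rfl
    have h5 : X ≤ 2 * (n * (k * k)) := by
      have : X * n = n * X := Nat.mul_comm _ _
      omega
    have h6 : 2 * (n * (k * k)) < X := by
      have e1 : 2 * (n * (k * k)) = 2 * k * (n * k) := by ring
      have e2 : X = n * k * (n * k) := by rw [hXdef, hNk]
      have e3 : 2 * k < 3 * k := by omega
      have e4 : 3 * k ≤ n * k := Nat.mul_le_mul_right k hn
      have e5 : 0 < n * k := by positivity
      have e6 : 2 * k * (n * k) < n * k * (n * k) :=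
        Nat.mul_lt_mul_of_lt_of_le (lt_of_lt_of_le e3 e4) (le_refl _) e5
      omega
    omega
  · push_neg at hY
    obtain ⟨x₀, y₀, hx₀⟩ := hY
    have hP : ∀ x : Fin n, ∃ y, N < 2 * c x y := by
      intro x
      obtain ⟨γ, hγ⟩ := htrans x₀ x
      refine ⟨q γ y₀, ?_⟩
      have := hinv γ x₀ y₀
      rw [hγ] at this
      rw [this]; exact hx₀
    choose yf hyf using hP
    have hyne : ∀ x, yf x ≠ star := by
      intro x h
      have h1 := hyf x
      rw [h, hkconst] at h1
      have h2 : 2 * k ≤ n * k := Nat.mul_le_mul_right k (by omega)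
      omega
    have hinj : ∀ x x', yf x = yf x' → x = x' := by
      intro x x' h
      by_contra hne
      have h1 := hyf x
      have h2 := hyf x'
      rw [h] at h1
      have hsub := Finset.sum_le_sum_of_subset (f := fun z => c z (yf x'))
        (Finset.subset_univ ({x, x'} : Finset (Fin n)))
      rw [Finset.sum_pair hne, hcol (yf x')] at hsub
      omega
    have hcard : (Finset.univ : Finset (Fin n)).card ≤ (Finset.univ.erase star).card := by
      apply Finset.card_le_card_of_injOn yf
      · intro x _
        exact Finset.mem_erase.mpr ⟨hyne x, Finset.mem_univ _⟩
      · intro a _ b _ hab; exact hinj a b hab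
    rw [Finset.card_erase_of_mem (Finset.mem_univ star)] at hcard
    simp [Finset.card_univ] at hcard
    omega

/-- deleting a point from a transitive action gives a function with small
uniform local defect which is uniformly far from every homomorphism into `Sym(n-1)`. -/
theorem statement18 {Γ : Type*} [Group Γ] (n : ℕ) (hn : 2 ≤ n)
    (f : Γ →* Equiv.Perm (Fin n)) (htrans : ∀ x y : Fin n, ∃ γ : Γ, f γ x = y)
    (fhat : Γ → Equiv.Perm (Fin (n - 1)))
    (hfhat : ∀ (γ : Γ) (x : Fin (n - 1)),
      (fhat γ x : ℕ) =
        if (f γ (Fin.castLE (Nat.sub_le n 1) x) : ℕ) = n - 1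
        then (f γ (f γ (Fin.castLE (Nat.sub_le n 1) x)) : ℕ)
        else (f γ (Fin.castLE (Nat.sub_le n 1) x) : ℕ)) :
    defectInfty fhat ≤ 2 / ((n : ℝ) - 1) ∧
    ∀ h : Γ →* Equiv.Perm (Fin (n - 1)),
      dInfty fhat (fun γ => h γ) ≥ 1 / 2 - 1 / ((n : ℝ) - 1) := by
  have hM : ((n - 1 : ℕ) : ℝ) = (n : ℝ) - 1 := by
    rw [Nat.cast_sub (by omega : 1 ≤ n), Nat.cast_one]
  have hMpos : (0 : ℝ) < (n : ℝ) - 1 := by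
    have : (2 : ℝ) ≤ (n : ℝ) := by exact_mod_cast hn
    linarith
  constructor
  · -- Part 1 : defect bound
    haveI : Nonempty (Γ × Γ) := ⟨(1, 1)⟩
    apply ciSup_le
    rintro ⟨γ₁, γ₂⟩
    rw [dH_eq_card, hM]
    have hcard : (Finset.univ.filter fun x : Fin (n - 1) =>
        fhat (γ₁ * γ₂) x ≠ (fhat γ₁ * fhat γ₂) x).card ≤ 2 := by
      have hsub : (Finset.univ.filter fun x : Fin (n - 1) =>
          fhat (γ₁ * γ₂) x ≠ (fhat γ₁ * fhat γ₂) x) ⊆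
          (Finset.univ.filter fun x : Fin (n - 1) =>
            ((f γ₂ (Fin.castLE (Nat.sub_le n 1) x) : Fin n) : ℕ) = n - 1) ∪
          (Finset.univ.filter fun x : Fin (n - 1) =>
            ((f (γ₁ * γ₂) (Fin.castLE (Nat.sub_le n 1) x) : Fin n) : ℕ) = n - 1) := by
        intro x hx
        have hx' := (Finset.mem_filter.mp hx).2
        rw [Finset.mem_union, Finset.mem_filter, Finset.mem_filter]
        by_contra hc
        push_neg at hc
        exact hx' (fhat_mul_apply hn f fhat hfhat γ₁ γ₂ x
          (hc.1 (Finset.mem_univ x)) (hc.2 (Finset.mem_univ x)))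
      have h1 : ∀ (δ : Γ), (Finset.univ.filter fun x : Fin (n - 1) =>
          ((f δ (Fin.castLE (Nat.sub_le n 1) x) : Fin n) : ℕ) = n - 1).card ≤ 1 := by
        intro δ
        apply Finset.card_le_one.mpr
        intro a ha b hb
        have ha' := (Finset.mem_filter.mp ha).2
        have hb' := (Finset.mem_filter.mp hb).2
        have : f δ (Fin.castLE (Nat.sub_le n 1) a) = f δ (Fin.castLE (Nat.sub_le n 1) b) :=
          Fin.ext (ha'.trans hb'.symm)
        have := (f δ).injective this
        exact Fin.ext (by simpa [Fin.ext_iff] using this)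
      calc _ ≤ _ := Finset.card_le_card hsub
        _ ≤ _ + _ := Finset.card_union_le _ _
        _ ≤ 2 := by have := h1 γ₂; have := h1 (γ₁ * γ₂); omega
    have h2 : ((Finset.univ.filter fun x : Fin (n - 1) =>
        fhat (γ₁ * γ₂) x ≠ (fhat γ₁ * fhat γ₂) x).card : ℝ) ≤ 2 := by exact_mod_cast hcard
    exact (div_le_div_iff_of_pos_right hMpos).mpr h2
  · -- Part 2 : far from homomorphisms
    intro h
    by_contra hcon
    push_neg at hcon
    have bdd : BddAbove (Set.range fun γ : Γ => dH (fhat γ) (h γ)) := by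
      refine ⟨1, ?_⟩
      rintro r ⟨γ, rfl⟩
      exact dH_le_one _ _
    have hle : ∀ γ : Γ, dH (fhat γ) (h γ) < 1 / 2 - 1 / ((n : ℝ) - 1) := fun γ =>
      lt_of_le_of_lt (le_ciSup bdd γ) hcon
    have h0 : (0 : ℝ) ≤ dH (fhat 1) (h 1) := dH_nonneg _ _
    have hhalf : 1 / ((n : ℝ) - 1) < 1 / 2 := by
      have := hle 1; linarith
    have hn4 : 4 ≤ n := by
      have h2 : (2 : ℝ) < (n : ℝ) - 1 := by
        rw [div_lt_div_iff₀ hMpos (by norm_num)] at hhalf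
        linarith
      have : (3 : ℝ) < (n : ℝ) := by linarith
      have : 3 < n := by exact_mod_cast this
      omega
    set star : Fin n := ⟨n - 1, by omega⟩ with hstardef
    set q : Γ →* Equiv.Perm (Fin n) :=
      (Equiv.Perm.extendDomainHom (extEquiv n)).comp h with hqdef
    have hqstar : ∀ γ : Γ, q γ star = star := fun γ =>
      Equiv.Perm.extendDomain_apply_not_subtype (h γ) (extEquiv n)
        (by simp [hstardef])
    have hqcast : ∀ (γ : Γ) (z : Fin (n - 1)),
        q γ (Fin.castLE (Nat.sub_le n 1) z) = Fin.castLE (Nat.sub_le n 1) (h γ z) := by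
      intro γ z
      show ((h γ).extendDomain (extEquiv n)) (Fin.castLE (Nat.sub_le n 1) z)
        = Fin.castLE (Nat.sub_le n 1) (h γ z)
      have h2 : (Fin.castLE (Nat.sub_le n 1) z)
          = (((extEquiv n) z : {w : Fin n // (w : ℕ) < n - 1}) : Fin n) := rfl
      have h3 : (Fin.castLE (Nat.sub_le n 1) (h γ z))
          = (((extEquiv n) (h γ z) : {w : Fin n // (w : ℕ) < n - 1}) : Fin n) := rfl
      rw [h2, h3]
      exact Equiv.Perm.extendDomain_apply_image (h γ) (extEquiv n) z
    have hD : ∀ γ : Γ, n ≤ 2 * (Finset.univ.filter fun x : Fin n => f γ x = q γ x).card := by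
      intro γ
      set e := (Finset.univ.filter fun x : Fin (n - 1) => fhat γ x ≠ h γ x).card with hedef
      have heR : (e : ℝ) < ((n : ℝ) - 1) / 2 - 1 := by
        have hd := hle γ
        rw [dH_eq_card, hM] at hd
        rw [div_lt_iff₀ hMpos] at hd
        have hcalc : (1 / 2 - 1 / ((n : ℝ) - 1)) * ((n : ℝ) - 1) = ((n : ℝ) - 1) / 2 - 1 := by
          field_simp
        rw [hcalc] at hd
        exact hd
      set A := Finset.univ.filter (fun x : Fin (n - 1) => fhat γ x = h γ x) with hAdef
      have hAe : A.card + e = n - 1 := by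
        rw [hAdef, hedef]
        have := Finset.card_filter_add_card_filter_not
          (s := (Finset.univ : Finset (Fin (n - 1))))
          (p := fun x => fhat γ x = h γ x)
        simp only [ne_eq]
        rw [this]
        simp
      set A' := A.filter (fun x : Fin (n - 1) => f γ (Fin.castLE (Nat.sub_le n 1) x) ≠ star)
        with hA'def
      have hA'1 : A.card ≤ A'.card + 1 := by
        have hsplit := Finset.card_filter_add_card_filter_not
          (s := A) (p := fun x => f γ (Fin.castLE (Nat.sub_le n 1) x) ≠ star)
        have hone : (A.filter (fun x => ¬ (f γ (Fin.castLE (Nat.sub_le n 1) x) ≠ star))).card ≤ 1 := by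
          apply Finset.card_le_one.mpr
          intro a ha b hb
          simp only [Finset.mem_filter, not_not] at ha hb
          have := (f γ).injective (ha.2.trans hb.2.symm)
          exact Fin.ext (by simpa [Fin.ext_iff] using this)
        rw [hA'def]
        omega
      have hA'D : A'.card ≤ (Finset.univ.filter fun x : Fin n => f γ x = q γ x).card := by
        apply Finset.card_le_card_of_injOn (fun x => Fin.castLE (Nat.sub_le n 1) x)
        · intro x hx
          rw [Finset.mem_coe, Finset.mem_filter] at hx
          obtain ⟨hxA, hxne⟩ := hx
          rw [hAdef, Finset.mem_filter] at hxA
          have hfh : fhat γ x = h γ x := hxA.2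
          refine Finset.mem_filter.mpr ⟨Finset.mem_univ _, ?_⟩
          have hval : (fhat γ x : ℕ) = ((f γ (Fin.castLE (Nat.sub_le n 1) x)) : ℕ) := by
            rw [hfhat, if_neg]
            intro hc
            exact hxne (Fin.ext (by simpa [hstardef] using hc))
          have hcast : Fin.castLE (Nat.sub_le n 1) (fhat γ x)
              = f γ (Fin.castLE (Nat.sub_le n 1) x) :=
            Fin.ext (by simpa using hval)
          rw [hqcast, ← hfh, hcast]
        · intro a _ b _ hab
          exact Fin.ext (by simpa [Fin.ext_iff] using hab)
      have hfinal : n - 1 ≤ (Finset.univ.filter fun x : Fin n => f γ x = q γ x).card + e + 1 := by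
        omega
      have hfinalR : (n : ℝ) - 1
          ≤ ((Finset.univ.filter fun x : Fin n => f γ x = q γ x).card : ℝ) + e + 1 := by
        rw [← hM]
        exact_mod_cast hfinal
      have h2R : (n : ℝ) < 2 * ((Finset.univ.filter fun x : Fin n => f γ x = q γ x).card : ℝ) + 1 := by
        linarith
      have : n < 2 * (Finset.univ.filter fun x : Fin n => f γ x = q γ x).card + 1 := by
        exact_mod_cast h2R
      omega
    exact key_lemma (by omega : 3 ≤ n) f q htrans star hqstar hD
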